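/- For every κ > 1, the equation √(1 - η/κ²) = η - 1 + √(η² - η) has a unique solution η* in the interval [1, 4/3), and η* is given in closed form by η* = 2κ² / ( (3/4)κ² + 3/2 - 1/(4κ²) + ((κ-1)/(2κ))·√((κ-1)(3κ+1))·√((3/4)κ² + 3/2 + 2κ - 1/(4κ²)) ). -/

import Mathlib

set_option maxHeartbeats 1000000

private lemma lt_of_sq_lt_sq (a b : ℝ) (h : a ^ 2 < b ^ 2) (hb : 0 ≤ b) : a < b := by
  nlinarith [sq_nonneg a, sq_nonneg b]

private lemma mono_aux (κ x y : ℝ) (hκ : 1 < κ) (hx : x ∈ Set.Ico (1:ℝ) (4/3))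
    (ex : Real.sqrt (1 - x / κ ^ 2) = x - 1 + Real.sqrt (x ^ 2 - x))
    (ey : Real.sqrt (1 - y / κ ^ 2) = y - 1 + Real.sqrt (y ^ 2 - y))
    (hxy : x < y) : False := by
  have hκ2 : (0:ℝ) < κ ^ 2 := by positivity
  have h1 : Real.sqrt (1 - y / κ ^ 2) ≤ Real.sqrt (1 - x / κ ^ 2) := by
    apply Real.sqrt_le_sqrt
    have : x / κ ^ 2 ≤ y / κ ^ 2 := by gcongr
    linarith
  have h2 : Real.sqrt (x ^ 2 - x) ≤ Real.sqrt (y ^ 2 - y) := by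
    apply Real.sqrt_le_sqrt
    nlinarith [hx.1]
  rw [ex, ey] at h1
  linarith

/-- For `κ > 1`, the equation `√(1 - η/κ²) = η - 1 + √(η² - η)` has a unique
solution `η*` in `[1, 4/3)`, given in closed form. -/
theorem stmt_6 (κ : ℝ) (hκ : 1 < κ) :
    ∃ η : ℝ,
      η = 2 * κ ^ 2 /
        ((3 / 4 * κ ^ 2 + 3 / 2 - 1 / (4 * κ ^ 2)) +
          (κ - 1) / (2 * κ) * Real.sqrt ((κ - 1) * (3 * κ + 1)) *
            Real.sqrt (3 / 4 * κ ^ 2 + 3 / 2 + 2 * κ - 1 / (4 * κ ^ 2))) ∧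
      η ∈ Set.Ico (1 : ℝ) (4 / 3) ∧
      Real.sqrt (1 - η / κ ^ 2) = η - 1 + Real.sqrt (η ^ 2 - η) ∧
      ∀ η' ∈ Set.Ico (1 : ℝ) (4 / 3),
        Real.sqrt (1 - η' / κ ^ 2) = η' - 1 + Real.sqrt (η' ^ 2 - η') → η' = η := by
  have hκ0 : (0:ℝ) < κ := by linarith
  have hκ2 : (1:ℝ) < κ ^ 2 := by nlinarith
  have hκ2' : (0:ℝ) < κ ^ 2 := by positivity
  set P : ℝ := 3 / 4 * κ ^ 2 + 3 / 2 - 1 / (4 * κ ^ 2) with hPdef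
  clear_value P
  have ha1 : (0:ℝ) < (κ - 1) * (3 * κ + 1) := by nlinarith
  have ha2 : (0:ℝ) < 3 / 4 * κ ^ 2 + 3 / 2 + 2 * κ - 1 / (4 * κ ^ 2) := by
    rw [sub_pos, div_lt_iff₀ (by positivity)]
    nlinarith
  set Q : ℝ := (κ - 1) / (2 * κ) * Real.sqrt ((κ - 1) * (3 * κ + 1)) *
      Real.sqrt (3 / 4 * κ ^ 2 + 3 / 2 + 2 * κ - 1 / (4 * κ ^ 2)) with hQdef
  clear_value Q
  have hQ0 : 0 < Q := by
    rw [hQdef]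
    apply mul_pos (mul_pos _ (Real.sqrt_pos.mpr ha1)) (Real.sqrt_pos.mpr ha2)
    exact div_pos (by linarith) (by linarith)
  have hQ2 : Q ^ 2 = P ^ 2 - 4 * κ ^ 2 := by
    have e : Q ^ 2 = ((κ - 1) / (2 * κ)) ^ 2 * (Real.sqrt ((κ - 1) * (3 * κ + 1))) ^ 2 *
        (Real.sqrt (3 / 4 * κ ^ 2 + 3 / 2 + 2 * κ - 1 / (4 * κ ^ 2))) ^ 2 := by
      rw [hQdef]; ring
    rw [e, Real.sq_sqrt ha1.le, Real.sq_sqrt ha2.le, hPdef]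
    field_simp
    ring
  have hPval : 4 * κ ^ 2 * P = 3 * κ ^ 4 + 6 * κ ^ 2 - 1 := by
    rw [hPdef]; field_simp; ring
  have hP2 : 2 < P := by
    nlinarith [hPval, hκ2', mul_pos (show (0:ℝ) < 3 * κ ^ 2 + 1 by nlinarith) (show (0:ℝ) < κ ^ 2 - 1 by linarith)]
  have hD0 : 0 < P + Q := by linarith
  set η : ℝ := 2 * κ ^ 2 / (P + Q) with hηdef
  clear_value η
  have hDη : η * (P + Q) = 2 * κ ^ 2 := by
    rw [hηdef, div_mul_cancel₀]
    exact hD0.ne'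
  -- η > 1
  have hQlt : Q < 2 * κ ^ 2 - P := by
    have hX : 0 < 2 * κ ^ 2 - P := by
      nlinarith [hPval, hκ2', mul_pos (show (0:ℝ) < 5 * κ ^ 2 - 1 by nlinarith) (show (0:ℝ) < κ ^ 2 - 1 by linarith)]
    have hsq : Q ^ 2 < (2 * κ ^ 2 - P) ^ 2 := by
      nlinarith [hQ2, hPval, mul_pos (show (0:ℝ) < κ ^ 2 - 1 by linarith) (show (0:ℝ) < κ ^ 2 - 1 by linarith)]
    exact lt_of_sq_lt_sq Q (2 * κ ^ 2 - P) hsq hX.le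
  have hη1 : 1 < η := by
    rw [hηdef, lt_div_iff₀ hD0]
    linarith
  -- η < 4/3
  have hQgt : 3 * κ ^ 2 / 2 - P < Q := by
    rcases le_or_gt (κ ^ 2) (3 / 2) with hc | hc
    · have h8 : 0 < 4 * κ ^ 2 * (P - 3 * κ ^ 2 / 2) := by
        nlinarith [hPval, mul_nonneg (show (0:ℝ) ≤ κ ^ 2 - 1 by linarith) (show (0:ℝ) ≤ 3 / 2 - κ ^ 2 by linarith)]
      nlinarith [h8, hκ2', hQ0]
    · have hsq : (3 * κ ^ 2 / 2 - P) ^ 2 < Q ^ 2 := by nlinarith [hQ2, hPval]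
      exact lt_of_sq_lt_sq _ _ hsq hQ0.le
  have hη43 : η < 4 / 3 := by
    rw [hηdef, div_lt_iff₀ hD0]
    linarith [hQgt]
  -- η < κ²
  have hηκ : η < κ ^ 2 := by
    rw [hηdef, div_lt_iff₀ hD0]
    nlinarith [hP2, hQ0, hκ2']
  -- 2ηκ² ≤ 3κ² - 1
  have hA : 2 * η * κ ^ 2 ≤ 3 * κ ^ 2 - 1 := by
    have hT : (3 * κ ^ 2 - 1) * Q > 4 * κ ^ 4 - (3 * κ ^ 2 - 1) * P := by
      rcases le_or_gt (4 * κ ^ 4 - (3 * κ ^ 2 - 1) * P) 0 with hc | hc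
      · have : 0 < (3 * κ ^ 2 - 1) * Q := mul_pos (by nlinarith) hQ0
        linarith
      · have h1 : ((3 * κ ^ 2 - 1) * Q) ^ 2 = (3 * κ ^ 2 - 1) ^ 2 * (P ^ 2 - 4 * κ ^ 2) := by
          rw [mul_pow, hQ2]
        have h2 : (3 * κ ^ 2 - 1) ^ 2 * (P ^ 2 - 4 * κ ^ 2) -
            (4 * κ ^ 4 - (3 * κ ^ 2 - 1) * P) ^ 2 = 2 * κ ^ 2 * (κ ^ 2 - 1) ^ 3 := by
          have hP : P = (3 * κ ^ 4 + 6 * κ ^ 2 - 1) / (4 * κ ^ 2) := by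
            rw [hPdef]; field_simp; ring
          rw [hP]; field_simp; ring
        have hsq : (4 * κ ^ 4 - (3 * κ ^ 2 - 1) * P) ^ 2 < ((3 * κ ^ 2 - 1) * Q) ^ 2 := by
          rw [h1]
          have hpos : (0:ℝ) < 2 * κ ^ 2 * (κ ^ 2 - 1) ^ 3 := by
            have h3 : (0:ℝ) < (κ ^ 2 - 1) ^ 3 := pow_pos (by nlinarith) 3
            positivity
          linarith [h2]
        have hQpos : 0 < (3 * κ ^ 2 - 1) * Q := mul_pos (by nlinarith) hQ0
        exact lt_of_sq_lt_sq _ _ hsq hQpos.le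
    have h4 : 4 * κ ^ 4 < (3 * κ ^ 2 - 1) * (P + Q) := by linarith [hT]
    have h5 : 2 * κ ^ 2 * (η * (P + Q)) = 4 * κ ^ 4 := by rw [hDη]; ring
    have h6 : 0 < (3 * κ ^ 2 - 1 - 2 * η * κ ^ 2) * (P + Q) := by linarith [h4, h5]
    by_contra hcon
    push_neg at hcon
    nlinarith [h6, hD0, hcon]
  -- quadratic satisfied by η
  have h1 : η * Q = 2 * κ ^ 2 - η * P := by linarith [hDη]
  have h2 : (η * Q) ^ 2 = (2 * κ ^ 2 - η * P) ^ 2 := by rw [h1]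
  have hq4 : 4 * κ ^ 2 * η ^ 2 - (3 * κ ^ 4 + 6 * κ ^ 2 - 1) * η + 4 * κ ^ 4 = 0 := by
    have key : 4 * κ ^ 2 * η ^ 2 - 4 * κ ^ 2 * P * η + 4 * κ ^ 4 = 0 := by
      linear_combination η ^ 2 * hQ2 - h2
    linear_combination key + η * hPval
  -- the defining equation
  set s : ℝ := Real.sqrt (η ^ 2 - η) with hsdef
  clear_value s
  have hs0 : 0 ≤ s := by rw [hsdef]; exact Real.sqrt_nonneg _
  have hs2 : s ^ 2 = η ^ 2 - η := by rw [hsdef]; exact Real.sq_sqrt (by nlinarith)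
  have h2s : 2 * κ ^ 2 * (η - 1) * s = η * (3 * κ ^ 2 - 2 * η * κ ^ 2 - 1) := by
    have hL : 0 ≤ 2 * κ ^ 2 * (η - 1) * s :=
      mul_nonneg (mul_nonneg (by positivity) (by linarith)) hs0
    have hR : 0 ≤ η * (3 * κ ^ 2 - 2 * η * κ ^ 2 - 1) :=
      mul_nonneg (by linarith) (by linarith)
    have hsq : (2 * κ ^ 2 * (η - 1) * s) ^ 2 = (η * (3 * κ ^ 2 - 2 * η * κ ^ 2 - 1)) ^ 2 := by
      linear_combination (4 * κ ^ 4 * (η - 1) ^ 2) * hs2 - η * hq4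
    exact (sq_eq_sq₀ hL hR).mp hsq
  have harg : 1 - η / κ ^ 2 = (η - 1 + s) ^ 2 := by
    field_simp
    linear_combination (-κ ^ 2) * hs2 - h2s
  have hmain : Real.sqrt (1 - η / κ ^ 2) = η - 1 + s := by
    rw [harg, Real.sqrt_sq (by linarith)]
  rw [hsdef] at hmain
  refine ⟨η, rfl, ⟨hη1.le, hη43⟩, hmain, ?_⟩
  intro η' hmem heq
  by_contra hne
  rcases lt_or_gt_of_ne hne with h | h
  · exact mono_aux κ η' η hκ hmem heq hmain h
  · exact mono_aux κ η η' hκ ⟨hη1.le, hη43⟩ hmain heq h
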